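/- In the basis setting for the new conventional 3-threshold scheme, let β, β' ∈ K be distinct with π(β + β') ≠ 1. Then for all share values z, z' ∈ K and all secrets s₀, s₁ ∈ F, the number of pairs (a₀, a₁) ∈ K × K satisfying a₀ + a₁·β + (π(a₁) + s₀)·β² = z and a₀ + a₁·β' + (π(a₁) + s₀)·β'² = z' equals the number of pairs (a₀, a₁) ∈ K × K satisfying a₀ + a₁·β + (π(a₁) + s₁)·β² = z and a₀ + a₁·β' + (π(a₁) + s₁)·β'² = z'. Hence two ordinary shares reveal no information about the secret (perfect secrecy against two participants). -/
import Mathlib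

noncomputable def stmt7map {F K : Type*} [Field F] [Field K] [Algebra F K]
    (π : K →ₗ[F] F) (β β' z : K) (s₀ s₁ : F) (p : K × K) : K × K :=
  (z - (p.2 + algebraMap F K ((s₀ - s₁) / (1 + π (β + β'))) * (β + β')) * β
      - algebraMap F K
          (π (p.2 + algebraMap F K ((s₀ - s₁) / (1 + π (β + β'))) * (β + β')) + s₁) * β ^ 2,
    p.2 + algebraMap F K ((s₀ - s₁) / (1 + π (β + β'))) * (β + β'))

lemma stmt7pi {F K : Type*} [Field F] [Field K] [Algebra F K]
    (π : K →ₗ[F] F) (c : F) (x : K) :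
    π (algebraMap F K c * x) = c * π x := by
  rw [← Algebra.smul_def, map_smul, smul_eq_mul]

lemma stmt7mem {F K : Type*} [Field F] [Field K] [Algebra F K]
    (π : K →ₗ[F] F) (β β' : K) (he : 1 + π (β + β') ≠ 0)
    (z z' : K) (s₀ s₁ : F) (p : K × K)
    (h1 : p.1 + p.2 * β + algebraMap F K (π p.2 + s₀) * β ^ 2 = z)
    (h2 : p.1 + p.2 * β' + algebraMap F K (π p.2 + s₀) * β' ^ 2 = z') :
    (stmt7map π β β' z s₀ s₁ p).1 + (stmt7map π β β' z s₀ s₁ p).2 * β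
        + algebraMap F K (π (stmt7map π β β' z s₀ s₁ p).2 + s₁) * β ^ 2 = z ∧
    (stmt7map π β β' z s₀ s₁ p).1 + (stmt7map π β β' z s₀ s₁ p).2 * β'
        + algebraMap F K (π (stmt7map π β β' z s₀ s₁ p).2 + s₁) * β' ^ 2 = z' := by
  set c : F := (s₀ - s₁) / (1 + π (β + β')) with hc
  have hkey : c + c * π (β + β') + s₁ - s₀ = 0 := by
    have h := div_mul_cancel₀ (s₀ - s₁) he
    rw [← hc] at h
    linear_combination h
  constructor
  · simp only [stmt7map]
    ring
  · simp only [stmt7map]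
    have hπb : π (p.2 + algebraMap F K c * (β + β')) = π p.2 + c * π (β + β') := by
      rw [map_add, stmt7pi]
    rw [hπb]
    have hM1 : algebraMap F K (π p.2 + c * π (β + β') + s₁)
        = algebraMap F K (π p.2) + algebraMap F K c * algebraMap F K (π (β + β')) +
          algebraMap F K s₁ := by
      rw [map_add, map_add, map_mul]
    have hM0 : algebraMap F K (π p.2 + s₀) = algebraMap F K (π p.2) + algebraMap F K s₀ := by
      rw [map_add]
    have hkeyK : algebraMap F K c + algebraMap F K c * algebraMap F K (π (β + β'))
        + algebraMap F K s₁ - algebraMap F K s₀ = 0 := by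
      rw [← map_mul, ← map_add, ← map_add, ← map_sub, hkey, map_zero]
    rw [hM1]
    rw [hM0] at h1 h2
    linear_combination h2 - h1 - (β ^ 2 - β' ^ 2) * hkeyK

lemma stmt7inv {F K : Type*} [Field F] [Field K] [Algebra F K]
    (π : K →ₗ[F] F) (β β' : K)
    (z : K) (s₀ s₁ : F) (p : K × K)
    (h1 : p.1 + p.2 * β + algebraMap F K (π p.2 + s₀) * β ^ 2 = z) :
    stmt7map π β β' z s₁ s₀ (stmt7map π β β' z s₀ s₁ p) = p := by
  have hneg : algebraMap F K ((s₁ - s₀) / (1 + π (β + β')))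
      = - algebraMap F K ((s₀ - s₁) / (1 + π (β + β'))) := by
    rw [← map_neg]
    congr 1
    ring
  have h2nd : (stmt7map π β β' z s₁ s₀ (stmt7map π β β' z s₀ s₁ p)).2 = p.2 := by
    simp only [stmt7map, hneg]
    ring
  refine Prod.ext ?_ h2nd
  simp only [stmt7map, hneg]
  have : p.2 + algebraMap F K ((s₀ - s₁) / (1 + π (β + β'))) * (β + β') +
      -algebraMap F K ((s₀ - s₁) / (1 + π (β + β'))) * (β + β') = p.2 := by ring
  rw [this]
  linear_combination -h1

theorem stmt_7 {F K : Type*} [Field F] [Field K] [Algebra F K] [CharP K 2] [Finite K]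
    (π : K →ₗ[F] F) (hπ1 : π 1 = 1)
    (β β' : K) (hβ : β ≠ β') (hπβ : π (β + β') ≠ 1)
    (z z' : K) (s₀ s₁ : F) :
    Nat.card {p : K × K //
        p.1 + p.2 * β + algebraMap F K (π p.2 + s₀) * β ^ 2 = z ∧
        p.1 + p.2 * β' + algebraMap F K (π p.2 + s₀) * β' ^ 2 = z'} =
    Nat.card {p : K × K //
        p.1 + p.2 * β + algebraMap F K (π p.2 + s₁) * β ^ 2 = z ∧
        p.1 + p.2 * β' + algebraMap F K (π p.2 + s₁) * β' ^ 2 = z'} := by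
  haveI : CharP F 2 := (Algebra.charP_iff F K 2).mpr inferInstance
  have he : 1 + π (β + β') ≠ 0 := by
    intro h
    apply hπβ
    have h2 : π (β + β') = -1 := neg_eq_of_add_eq_zero_right h |>.symm ▸ rfl
    rw [h2, CharTwo.neg_eq]
  refine Nat.card_congr ?_
  exact
    { toFun := fun p => ⟨stmt7map π β β' z s₀ s₁ p.1,
        stmt7mem π β β' he z z' s₀ s₁ p.1 p.2.1 p.2.2⟩
      invFun := fun q => ⟨stmt7map π β β' z s₁ s₀ q.1,
        stmt7mem π β β' he z z' s₁ s₀ q.1 q.2.1 q.2.2⟩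
      left_inv := fun p => Subtype.ext (stmt7inv π β β' z s₀ s₁ p.1 p.2.1)
      right_inv := fun q => Subtype.ext (stmt7inv π β β' z s₁ s₀ q.1 q.2.1) }
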